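/- arXiv:2311.01568 — 2 statements merged into one kernel-verified Lean document; each statement's English description precedes it below -/
import Mathlib

section
/- Suppose every per-round cost satisfies c_i(x,a) ≥ ε ≥ 0 and the per-round cost differences satisfy |c_i - c†_i| ≤ Σ_{j=1}^{i} q_{j,i} d_j for nonnegative weights q_{j,i} and action deviations d_j ≥ 0. Then for every h' ∈ [H], the condition Σ_{j=1}^{h'} Γ_{j,j} d_j ≤ h'(λε + b), where Γ_{j,j} = Σ_{i=j}^{H} q_{j,i}, implies the anytime competitive constraint Σ_{i=1}^{h'} c_i ≤ (1+λ) Σ_{i=1}^{h'} c†_i + h' b. -/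
/-- The initialization-only sufficient condition implies the anytime competitive constraint. -/
theorem stmt2 (H : ℕ) (ε lam b : ℝ) (c cd d : ℕ → ℝ) (q : ℕ → ℕ → ℝ)
    (hε : 0 ≤ ε) (hlam : 0 ≤ lam) (hb : 0 ≤ b)
    (hq : ∀ j i, 0 ≤ q j i) (hd : ∀ j, 0 ≤ d j)
    (hc : ∀ i, ε ≤ c i) (hcd : ∀ i, ε ≤ cd i)
    (hdiff : ∀ i ∈ Finset.Icc 1 H, |c i - cd i| ≤ ∑ j ∈ Finset.Icc 1 i, q j i * d j)
    (Γ : ℕ → ℝ) (hΓ : ∀ j, Γ j = ∑ i ∈ Finset.Icc j H, q j i)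
    (h' : ℕ) (hh' : h' ∈ Finset.Icc 1 H)
    (hcond : ∑ j ∈ Finset.Icc 1 h', Γ j * d j ≤ (h' : ℝ) * (lam * ε + b)) :
    ∑ i ∈ Finset.Icc 1 h', c i ≤ (1 + lam) * ∑ i ∈ Finset.Icc 1 h', cd i + (h' : ℝ) * b := by
  simp only [Finset.mem_Icc] at hh'
  obtain ⟨hh1, hhH⟩ := hh'
  -- step 1: sum of differences bounded by double sum
  have step1 : ∑ i ∈ Finset.Icc 1 h', (c i - cd i)
      ≤ ∑ i ∈ Finset.Icc 1 h', ∑ j ∈ Finset.Icc 1 i, q j i * d j := by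
    apply Finset.sum_le_sum
    intro i hi
    simp only [Finset.mem_Icc] at hi
    have := hdiff i (Finset.mem_Icc.mpr ⟨hi.1, le_trans hi.2 hhH⟩)
    exact le_trans (le_abs_self _) this
  -- swap the double sum
  have swap : ∑ i ∈ Finset.Icc 1 h', ∑ j ∈ Finset.Icc 1 i, q j i * d j
      = ∑ j ∈ Finset.Icc 1 h', ∑ i ∈ Finset.Icc j h', q j i * d j := by
    rw [Finset.sum_sigma', Finset.sum_sigma']
    apply Finset.sum_nbij' (fun p => ⟨p.2, p.1⟩) (fun p => ⟨p.2, p.1⟩) <;>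
      simp only [Finset.mem_sigma, Finset.mem_Icc] <;> intro p hp <;>
      first | omega | trivial
  -- step 2: inner sum bounded by Γ j * d j
  have step2 : ∑ j ∈ Finset.Icc 1 h', ∑ i ∈ Finset.Icc j h', q j i * d j
      ≤ ∑ j ∈ Finset.Icc 1 h', Γ j * d j := by
    apply Finset.sum_le_sum
    intro j hj
    rw [hΓ j, Finset.sum_mul]
    apply Finset.sum_le_sum_of_subset_of_nonneg
    · exact Finset.Icc_subset_Icc_right hhH
    · intro i _ _
      exact mul_nonneg (hq j i) (hd j)
  -- step 3: h' * ε ≤ sum cd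
  have step3 : (h' : ℝ) * ε ≤ ∑ i ∈ Finset.Icc 1 h', cd i := by
    calc (h' : ℝ) * ε = ∑ _i ∈ Finset.Icc 1 h', ε := by
          rw [Finset.sum_const, Nat.card_Icc]
          simp [nsmul_eq_mul]
      _ ≤ _ := Finset.sum_le_sum fun i _ => hcd i
  have key : ∑ i ∈ Finset.Icc 1 h', (c i - cd i) ≤ (h' : ℝ) * (lam * ε + b) :=
    le_trans step1 (le_trans (le_of_eq swap) (le_trans step2 hcond))
  have : (h' : ℝ) * (lam * ε) ≤ lam * ∑ i ∈ Finset.Icc 1 h', cd i := by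
    calc (h' : ℝ) * (lam * ε) = lam * ((h' : ℝ) * ε) := by ring
      _ ≤ _ := mul_le_mul_of_nonneg_left step3 hlam
  rw [Finset.sum_sub_distrib] at key
  nlinarith [key, this]
end

section
/- Suppose per-round costs satisfy c_i ≥ ε and c†_i ≥ ĉ†_i := max{ε, c_i - Σ_{j=1}^{i} q_{j,i} d_j}, and the cost differences satisfy |c_i - c†_i| ≤ Σ_{j=1}^{i} q_{j,i} d_j. Then for any rounds h ≤ h' in [H], the condition Σ_{j=h}^{h'} Γ_{j,j} d_j ≤ Σ_{i=1}^{h-1}((1+λ)ĉ†_i - c_i - Γ_{i,h} d_i) + (h'-h+1)(λε + b) implies the anytime competitive constraint Σ_{i=1}^{h'} c_i ≤ (1+λ) Σ_{i=1}^{h'} c†_i + h' b. -/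
/-- The feedback-based sufficient condition at round `h` implies the anytime
competitive constraint at any round `h' ≥ h`. -/
theorem stmt5 (H : ℕ) (ε lam b : ℝ) (c cd d : ℕ → ℝ) (q : ℕ → ℕ → ℝ)
    (hε : 0 ≤ ε) (hlam : 0 ≤ lam) (hb : 0 ≤ b)
    (hq : ∀ j i, 0 ≤ q j i) (hd : ∀ j, 0 ≤ d j)
    (hc : ∀ i, ε ≤ c i)
    (chat : ℕ → ℝ)
    (hchat : ∀ i, chat i = max ε (c i - ∑ j ∈ Finset.Icc 1 i, q j i * d j))
    (hcd : ∀ i, chat i ≤ cd i)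
    (hdiff : ∀ i, |c i - cd i| ≤ ∑ j ∈ Finset.Icc 1 i, q j i * d j)
    (Γ : ℕ → ℕ → ℝ) (hΓ : ∀ j n, Γ j n = ∑ i ∈ Finset.Icc n H, q j i)
    (h h' : ℕ) (h1 : 1 ≤ h) (h2 : h ≤ h') (h3 : h' ≤ H)
    (hcond : ∑ j ∈ Finset.Icc h h', Γ j j * d j ≤
      (∑ i ∈ Finset.Icc 1 (h - 1), ((1 + lam) * chat i - c i - Γ i h * d i))
        + ((h' : ℝ) - (h : ℝ) + 1) * (lam * ε + b)) :
    ∑ i ∈ Finset.Icc 1 h', c i ≤ (1 + lam) * ∑ i ∈ Finset.Icc 1 h', cd i + (h' : ℝ) * b := by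
  have hsplit : ∀ f : ℕ → ℝ, ∑ i ∈ Finset.Icc 1 h', f i
      = ∑ i ∈ Finset.Icc 1 (h-1), f i + ∑ i ∈ Finset.Icc h h', f i := by
    intro f
    rw [show Finset.Icc h h' = Finset.Ioc (h-1) h' from by
          ext a; simp only [Finset.mem_Icc, Finset.mem_Ioc]; omega,
        show Finset.Icc 1 (h-1) = Finset.Ioc 0 (h-1) from by
          ext a; simp only [Finset.mem_Icc, Finset.mem_Ioc]; omega,
        show Finset.Icc 1 h' = Finset.Ioc 0 h' from by
          ext a; simp only [Finset.mem_Icc, Finset.mem_Ioc]; omega]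
    exact (Finset.sum_Ioc_consecutive f (Nat.zero_le _) (by omega)).symm
  have hsplit2 : ∀ g : ℕ → ℝ, ∀ i, h ≤ i → ∑ j ∈ Finset.Icc 1 i, g j
      = ∑ j ∈ Finset.Icc 1 (h-1), g j + ∑ j ∈ Finset.Icc h i, g j := by
    intro g i hi
    rw [show Finset.Icc h i = Finset.Ioc (h-1) i from by
          ext a; simp only [Finset.mem_Icc, Finset.mem_Ioc]; omega,
        show Finset.Icc 1 (h-1) = Finset.Ioc 0 (h-1) from by
          ext a; simp only [Finset.mem_Icc, Finset.mem_Ioc]; omega,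
        show Finset.Icc 1 i = Finset.Ioc 0 i from by
          ext a; simp only [Finset.mem_Icc, Finset.mem_Ioc]; omega]
    exact (Finset.sum_Ioc_consecutive g (Nat.zero_le _) (by omega)).symm
  have step1 : ∑ i ∈ Finset.Icc h h', c i ≤ ∑ i ∈ Finset.Icc h h', cd i
      + ∑ i ∈ Finset.Icc h h', ∑ j ∈ Finset.Icc 1 i, q j i * d j := by
    rw [← Finset.sum_add_distrib]
    refine Finset.sum_le_sum fun i _ => ?_
    have := (abs_le.mp (hdiff i)).2
    linarith
  have step2 : ∑ i ∈ Finset.Icc h h', ∑ j ∈ Finset.Icc 1 i, q j i * d j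
      = ∑ i ∈ Finset.Icc h h', ∑ j ∈ Finset.Icc 1 (h-1), q j i * d j
        + ∑ i ∈ Finset.Icc h h', ∑ j ∈ Finset.Icc h i, q j i * d j := by
    rw [← Finset.sum_add_distrib]
    refine Finset.sum_congr rfl fun i hi => ?_
    exact hsplit2 _ i (Finset.mem_Icc.mp hi).1
  have step3 : ∑ i ∈ Finset.Icc h h', ∑ j ∈ Finset.Icc 1 (h-1), q j i * d j
      ≤ ∑ j ∈ Finset.Icc 1 (h-1), Γ j h * d j := by
    rw [Finset.sum_comm]
    refine Finset.sum_le_sum fun j _ => ?_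
    rw [hΓ, ← Finset.sum_mul]
    refine mul_le_mul_of_nonneg_right ?_ (hd j)
    exact Finset.sum_le_sum_of_subset_of_nonneg (Finset.Icc_subset_Icc_right h3)
      (fun i _ _ => hq j i)
  have swap : ∑ i ∈ Finset.Icc h h', ∑ j ∈ Finset.Icc h i, q j i * d j
      = ∑ j ∈ Finset.Icc h h', ∑ i ∈ Finset.Icc j h', q j i * d j := by
    have := Finset.sum_Ico_Ico_comm h (h' + 1) (fun j i => q j i * d j)
    simp only [Finset.Ico_add_one_right_eq_Icc] at this
    rw [← this]
  have step4 : ∑ i ∈ Finset.Icc h h', ∑ j ∈ Finset.Icc h i, q j i * d j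
      ≤ ∑ j ∈ Finset.Icc h h', Γ j j * d j := by
    rw [swap]
    refine Finset.sum_le_sum fun j _ => ?_
    rw [hΓ, ← Finset.sum_mul]
    refine mul_le_mul_of_nonneg_right ?_ (hd j)
    exact Finset.sum_le_sum_of_subset_of_nonneg (Finset.Icc_subset_Icc_right h3)
      (fun i _ _ => hq j i)
  have hAsum : ∑ j ∈ Finset.Icc 1 (h-1), ((1 + lam) * chat j - c j - Γ j h * d j)
      = (1 + lam) * ∑ j ∈ Finset.Icc 1 (h-1), chat j
        - ∑ j ∈ Finset.Icc 1 (h-1), c j - ∑ j ∈ Finset.Icc 1 (h-1), Γ j h * d j := by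
    rw [Finset.mul_sum, ← Finset.sum_sub_distrib, ← Finset.sum_sub_distrib]
  have hchatA : ∑ j ∈ Finset.Icc 1 (h-1), chat j ≤ ∑ j ∈ Finset.Icc 1 (h-1), cd j :=
    Finset.sum_le_sum fun j _ => hcd j
  have hcdB : ((h' : ℝ) - (h : ℝ) + 1) * ε ≤ ∑ i ∈ Finset.Icc h h', cd i := by
    have hcard : ((Finset.Icc h h').card : ℝ) = (h' : ℝ) - (h : ℝ) + 1 := by
      rw [Nat.card_Icc, Nat.cast_sub (by omega)]
      push_cast; ring
    calc ((h' : ℝ) - (h : ℝ) + 1) * ε = ∑ _i ∈ Finset.Icc h h', ε := by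
          rw [Finset.sum_const, nsmul_eq_mul, hcard]
      _ ≤ ∑ i ∈ Finset.Icc h h', cd i :=
          Finset.sum_le_sum fun i _ => le_trans (le_trans (le_max_left _ _)
            (le_of_eq (hchat i).symm)) (hcd i)
  have hBb : ((h' : ℝ) - (h : ℝ) + 1) * b ≤ (h' : ℝ) * b := by
    refine mul_le_mul_of_nonneg_right ?_ hb
    have : (1 : ℝ) ≤ (h : ℝ) := by exact_mod_cast h1
    linarith
  have hlamB : lam * (((h' : ℝ) - (h : ℝ) + 1) * ε) ≤ lam * ∑ i ∈ Finset.Icc h h', cd i :=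
    mul_le_mul_of_nonneg_left hcdB hlam
  rw [hsplit c, hsplit cd]
  nlinarith [hcond, step1, step2, step3, step4, hAsum, hchatA, hlamB, hBb]
end
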